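/- For all reals α > 1 and c > 1, if γ is a real number with 1 < γ < 1 + (c−1)/α and D(1/α ‖ (γ−1)/(c−1)) = ln(c)/α, then γ < αc/(1 + (α−1)c). -/

import Mathlib

/-- Kullback–Leibler divergence `D(a‖b) = a·ln(a/b) + (1−a)·ln((1−a)/(1−b))`.
(The convention `0·ln 0 = 0` holds automatically since `Real.log 0 = 0`.) -/
noncomputable def klDiv (a b : ℝ) : ℝ :=
  a * Real.log (a / b) + (1 - a) * Real.log ((1 - a) / (1 - b))

/-- For all reals `α > 1` and `c > 1`, if `γ` satisfies `1 < γ < 1 + (c−1)/α` and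
`D(1/α ‖ (γ−1)/(c−1)) = ln(c)/α`, then `γ < αc/(1 + (α−1)c)`. -/
theorem stmt3 (α c γ : ℝ) (hα : 1 < α) (hc : 1 < c)
    (h1 : 1 < γ) (h2 : γ < 1 + (c - 1) / α)
    (h3 : klDiv (1 / α) ((γ - 1) / (c - 1)) = Real.log c / α) :
    γ < α * c / (1 + (α - 1) * c) := by
  have hα0 : (0:ℝ) < α := by linarith
  have hc0 : (0:ℝ) < c - 1 := by linarith
  set S : ℝ := 1 + (α - 1) * c with hSdef
  have hSα : α < S := by nlinarith
  have hS0 : (0:ℝ) < S := by linarith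
  have hSc : S < α * c := by nlinarith
  set a : ℝ := 1 / α with hadef
  set b : ℝ := (γ - 1) / (c - 1) with hbdef
  have ha0 : 0 < a := by positivity
  have ha1 : a < 1 := by rw [hadef, div_lt_one hα0]; linarith
  have hb0 : 0 < b := div_pos (by linarith) hc0
  have hba : b < a := by
    rw [hbdef, hadef, div_lt_div_iff₀ hc0 hα0]
    have h2' : γ - 1 < (c - 1) / α := by linarith
    have := (lt_div_iff₀ hα0).mp h2'
    linarith
  -- suppose not
  by_contra hcon
  push_neg at hcon
  have hb₀b : 1 / S ≤ b := by
    have hγS : α * c ≤ γ * S := by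
      have := (div_le_iff₀ hS0).mp hcon
      linarith
    rw [hbdef, div_le_div_iff₀ hS0 hc0]
    nlinarith
  have hb₀0 : (0:ℝ) < 1 / S := by positivity
  -- monotone function f
  set f : ℝ → ℝ := fun x => a * Real.log x + (1 - a) * Real.log (1 - x) with hfdef
  have hderiv : ∀ x ∈ Set.Icc (1/S) b, HasDerivAt f (a / x - (1 - a) / (1 - x)) x := by
    intro x hx
    have hx0 : 0 < x := lt_of_lt_of_le hb₀0 hx.1
    have hx1 : x < 1 := lt_trans (lt_of_le_of_lt hx.2 hba) ha1
    have h1x : 0 < 1 - x := by linarith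
    have hl1 : HasDerivAt (fun y : ℝ => Real.log y) x⁻¹ x := Real.hasDerivAt_log hx0.ne'
    have hl2 : HasDerivAt (fun y : ℝ => (1:ℝ) - y) (-1) x := (hasDerivAt_id x).const_sub 1
    have hl3 : HasDerivAt (fun y : ℝ => Real.log (1 - y)) ((1 - x)⁻¹ * (-1)) x :=
      (Real.hasDerivAt_log h1x.ne').comp x hl2
    have := (hl1.const_mul a).add (hl3.const_mul (1 - a))
    refine this.congr_deriv ?_
    ring
  have hcont : ContinuousOn f (Set.Icc (1/S) b) := fun x hx =>
    (hderiv x hx).continuousAt.continuousWithinAt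
  have hmono : StrictMonoOn f (Set.Icc (1/S) b) := by
    apply strictMonoOn_of_deriv_pos (convex_Icc _ _) hcont
    intro x hx
    rw [interior_Icc] at hx
    have hx' : x ∈ Set.Icc (1/S) b := ⟨le_of_lt hx.1, le_of_lt hx.2⟩
    rw [(hderiv x hx').deriv]
    have hx0 : 0 < x := lt_of_lt_of_le hb₀0 hx'.1
    have hxa : x < a := lt_of_le_of_lt hx'.2 hba
    have h1x : 0 < 1 - x := by linarith
    rw [sub_pos, div_lt_div_iff₀ h1x hx0]
    nlinarith
  have hfle : f (1/S) ≤ f b :=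
    hmono.monotoneOn ⟨le_refl _, hb₀b⟩ ⟨hb₀b, le_refl _⟩ hb₀b
  -- klDiv a x = C - f x
  have hb₀a : 1/S < a := by
    rw [hadef, div_lt_div_iff₀ hS0 hα0]; linarith
  have hkl : ∀ x : ℝ, 0 < x → x < 1 →
      klDiv a x = (a * Real.log a + (1 - a) * Real.log (1 - a)) - f x := by
    intro x hx0 hx1
    have h1x : 0 < 1 - x := by linarith
    have h1a : 0 < 1 - a := by linarith
    unfold klDiv
    rw [hfdef]
    rw [Real.log_div ha0.ne' hx0.ne', Real.log_div h1a.ne' h1x.ne']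
    ring
  have hkb : klDiv a b = (a * Real.log a + (1 - a) * Real.log (1 - a)) - f b :=
    hkl b hb0 (lt_trans hba ha1)
  have hkb₀ : klDiv a (1/S) = (a * Real.log a + (1 - a) * Real.log (1 - a)) - f (1/S) :=
    hkl (1/S) hb₀0 (lt_trans hb₀a ha1)
  have hle : klDiv a b ≤ klDiv a (1/S) := by rw [hkb, hkb₀]; linarith
  -- compute klDiv a (1/S)
  have hα1 : (0:ℝ) < α - 1 := by linarith
  have hc0' : (0:ℝ) < c := by linarith
  have e1 : a / (1/S) = S / α := by rw [hadef]; field_simp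
  have e1' : Real.log (a / (1/S)) = Real.log S - Real.log α := by
    rw [e1, Real.log_div hS0.ne' hα0.ne']
  have e2 : (1 - a) / (1 - 1/S) = S / (α * c) := by
    rw [hadef]
    have hS1 : 1 - 1/S = (α - 1) * c / S := by field_simp; ring
    rw [hS1, div_eq_div_iff (by positivity) (by positivity)]
    field_simp
  have e2' : Real.log ((1 - a) / (1 - 1/S)) = Real.log S - Real.log α - Real.log c := by
    rw [e2, Real.log_div hS0.ne' (by positivity), Real.log_mul hα0.ne' hc0'.ne']
    ring
  have hval : klDiv a (1/S) =
      (Real.log S - Real.log α - Real.log c) + Real.log c / α := by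
    unfold klDiv
    rw [e1', e2', hadef]
    field_simp
    ring
  have hlog : Real.log S < Real.log α + Real.log c := by
    have := Real.log_lt_log hS0 hSc
    rwa [Real.log_mul hα0.ne' hc0'.ne'] at this
  rw [h3] at hle
  rw [hval] at hle
  linarith
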